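/- Let X be a finite-dimensional real Hilbert space decomposed as X = Σ_{i∈I} X_i, with additive Schwarz operator S = Σ_i S_i where S_i is the X-orthogonal projection onto X_i. Then S is invertible and ⟨S^{-1}x, x⟩_X = |||x|||_X² := inf{Σ_{i∈I} ‖x_i‖_X² : x = Σ_i x_i, x_i ∈ X_i} for all x ∈ X. -/

import Mathlib

open scoped BigOperators

/-- The squared multilevel norm `|||x|||²` associated with a subspace decomposition:
infimum of `Σ_i ‖x_i‖²` over all decompositions `x = Σ_i x_i` with `x_i ∈ X_i`. -/
noncomputable def multiNormSq {ι X : Type*} [Fintype ι]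
    [NormedAddCommGroup X] [InnerProductSpace ℝ X]
    (Xs : ι → Submodule ℝ X) (x : X) : ℝ :=
  sInf {r : ℝ | ∃ f : ι → X, (∀ i, f i ∈ Xs i) ∧ (∑ i, f i) = x ∧ r = ∑ i, ‖f i‖ ^ 2}

/-- Membership in a finite sum of submodules gives a decomposition. -/
lemma aux_mem_sum {ι : Type*} {X : Type*} [AddCommGroup X] [Module ℝ X]
    (s : Finset ι) (Xs : ι → Submodule ℝ X) (x : X)
    (hx : x ∈ ∑ i ∈ s, Xs i) :
    ∃ f : ι → X, (∀ i, f i ∈ Xs i) ∧ ∑ i ∈ s, f i = x := by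
  classical
  induction s using Finset.induction_on generalizing x with
  | empty =>
      simp only [Finset.sum_empty] at hx ⊢
      refine ⟨fun _ => 0, fun i => (Xs i).zero_mem, ?_⟩
      simpa using (Submodule.mem_bot ℝ).mp hx |>.symm
  | @insert a s ha ih =>
      rw [Finset.sum_insert ha, Submodule.add_eq_sup, Submodule.mem_sup] at hx
      obtain ⟨y, hy, z, hz, rfl⟩ := hx
      obtain ⟨f, hf, hfz⟩ := ih z hz
      refine ⟨fun j => if j = a then y else f j, ?_, ?_⟩
      · intro i
        by_cases h : i = a
        · subst h; simpa using hy
        · simpa [h] using hf i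
      · have hrest : ∑ j ∈ s, (if j = a then y else f j) = ∑ j ∈ s, f j :=
          Finset.sum_congr rfl fun j hj =>
            if_neg (fun h : j = a => ha (h ▸ hj))
        rw [Finset.sum_insert ha, if_pos rfl, hrest, hfz]

/-- Oswald's identity: for a finite-dimensional Hilbert space `X = Σ_i X_i`, the
additive Schwarz operator `S = Σ_i S_i` is invertible and
`⟨S⁻¹ x, x⟩ = |||x|||²` for all `x ∈ X`. -/
theorem stmt_9 (ι X : Type) [Fintype ι]
    [NormedAddCommGroup X] [InnerProductSpace ℝ X] [FiniteDimensional ℝ X]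
    (Xs : ι → Submodule ℝ X)
    (hdecomp : (∑ i, Xs i) = (⊤ : Submodule ℝ X)) :
    ∃ Sinv : X →L[ℝ] X,
      (∀ x : X, Sinv ((∑ i, (Xs i).subtypeL.comp ((Xs i).orthogonalProjectionOnto) :
          X →L[ℝ] X) x) = x) ∧
      (∀ x : X, (∑ i, (Xs i).subtypeL.comp ((Xs i).orthogonalProjectionOnto) :
          X →L[ℝ] X) (Sinv x) = x) ∧
      (∀ x : X, (inner ℝ (Sinv x) x : ℝ) = multiNormSq Xs x) := by
  classical
  set S : X →L[ℝ] X := (∑ i, (Xs i).subtypeL.comp ((Xs i).orthogonalProjectionOnto)) with hS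
  -- key projection lemma
  have hproj : ∀ (i : ι) (w v : X), w ∈ Xs i →
      (inner ℝ w v : ℝ) = inner ℝ w (((Xs i).orthogonalProjectionOnto v : Xs i) : X) := by
    intro i w v hw
    have h : (inner ℝ (v - ((Xs i).orthogonalProjectionOnto v : X)) w : ℝ) = 0 :=
      (Xs i).starProjection_inner_eq_zero v w hw
    rw [inner_sub_left, sub_eq_zero] at h
    rw [real_inner_comm v w, h, real_inner_comm w]
  have hSapp : ∀ x : X, S x = ∑ i, (((Xs i).orthogonalProjectionOnto x : Xs i) : X) := by
    intro x
    rw [hS, ContinuousLinearMap.sum_apply]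
    rfl
  have hS_inner : ∀ x y : X, (inner ℝ (S x) y : ℝ) =
      ∑ i, (inner ℝ (((Xs i).orthogonalProjectionOnto x : Xs i) : X) y : ℝ) := by
    intro x y
    rw [hSapp, sum_inner]
  have hS_sq : ∀ y : X, (inner ℝ (S y) y : ℝ) =
      ∑ i, ‖(((Xs i).orthogonalProjectionOnto y : Xs i) : X)‖ ^ 2 := by
    intro y
    rw [hS_inner]
    refine Finset.sum_congr rfl fun i _ => ?_
    rw [hproj i _ y ((Xs i).orthogonalProjectionOnto y).2, real_inner_self_eq_norm_sq]
  -- every x decomposes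
  have hdec : ∀ x : X, ∃ f : ι → X, (∀ i, f i ∈ Xs i) ∧ ∑ i, f i = x := by
    intro x
    exact aux_mem_sum Finset.univ Xs x (hdecomp ▸ Submodule.mem_top)
  -- S is injective
  have hker : ∀ x : X, S x = 0 → x = 0 := by
    intro x hx
    have h0 : (∑ i, ‖(((Xs i).orthogonalProjectionOnto x : Xs i) : X)‖ ^ 2) = 0 := by
      rw [← hS_sq, hx, inner_zero_left]
    have hzero : ∀ i : ι, (((Xs i).orthogonalProjectionOnto x : Xs i) : X) = 0 := by
      intro i
      have := (Finset.sum_eq_zero_iff_of_nonneg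
        (fun i _ => by positivity)).mp h0 i (Finset.mem_univ i)
      have := pow_eq_zero_iff (n := 2) (by norm_num) |>.mp this
      simpa using this
    obtain ⟨f, hf, hfx⟩ := hdec x
    have : (inner ℝ x x : ℝ) = 0 := by
      calc (inner ℝ x x : ℝ) = inner ℝ (∑ i, f i) x := by rw [hfx]
        _ = ∑ i, (inner ℝ (f i) x : ℝ) := by rw [sum_inner]
        _ = 0 := Finset.sum_eq_zero fun i _ => by
            rw [hproj i (f i) x (hf i), hzero i, inner_zero_right]
    exact inner_self_eq_zero.mp this
  have hinj : Function.Injective S := by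
    intro a b hab
    have : S (a - b) = 0 := by rw [map_sub, hab, sub_self]
    have := hker _ this
    exact sub_eq_zero.mp this
  -- build the inverse
  have hbij : Function.Bijective (S : X →ₗ[ℝ] X) :=
    ⟨hinj, (LinearMap.injective_iff_surjective).mp hinj⟩
  let e : X ≃ₗ[ℝ] X := LinearEquiv.ofBijective (S : X →ₗ[ℝ] X) hbij
  let Sinv : X →L[ℝ] X := LinearMap.toContinuousLinearMap e.symm.toLinearMap
  have hleft : ∀ x : X, Sinv (S x) = x := by
    intro x
    show e.symm (e x) = x
    exact e.symm_apply_apply x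
  have hright : ∀ x : X, S (Sinv x) = x := by
    intro x
    show e (e.symm x) = x
    exact e.apply_symm_apply x
  refine ⟨Sinv, fun x => hleft x, fun x => hright x, ?_⟩
  intro x
  set y : X := Sinv x with hy
  have hSy : S y = x := hright x
  set c : ℝ := inner ℝ y x with hc
  have hcc : c = ∑ i, ‖(((Xs i).orthogonalProjectionOnto y : Xs i) : X)‖ ^ 2 := by
    rw [hc, real_inner_comm, ← hSy, hS_sq]
  -- c is in the set
  have hmem : c ∈ {r : ℝ | ∃ f : ι → X, (∀ i, f i ∈ Xs i) ∧ (∑ i, f i) = x ∧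
      r = ∑ i, ‖f i‖ ^ 2} := by
    refine ⟨fun i => (((Xs i).orthogonalProjectionOnto y : Xs i) : X),
      fun i => ((Xs i).orthogonalProjectionOnto y).2, ?_, hcc⟩
    rw [← hSapp, hSy]
  -- c is a lower bound
  have hlb : ∀ r ∈ {r : ℝ | ∃ f : ι → X, (∀ i, f i ∈ Xs i) ∧ (∑ i, f i) = x ∧
      r = ∑ i, ‖f i‖ ^ 2}, c ≤ r := by
    rintro r ⟨f, hf, hsum, rfl⟩
    have hc2 : c = ∑ i, (inner ℝ (f i)
        (((Xs i).orthogonalProjectionOnto y : Xs i) : X) : ℝ) := by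
      rw [hc, real_inner_comm, ← hsum, sum_inner]
      exact Finset.sum_congr rfl fun i _ => hproj i (f i) y (hf i)
    have key : (∑ i, ‖f i‖ ^ 2) - c =
        ∑ i, ‖f i - (((Xs i).orthogonalProjectionOnto y : Xs i) : X)‖ ^ 2 := by
      have expand : ∀ i : ι,
          ‖f i - (((Xs i).orthogonalProjectionOnto y : Xs i) : X)‖ ^ 2 =
          ‖f i‖ ^ 2 - 2 * (inner ℝ (f i)
            (((Xs i).orthogonalProjectionOnto y : Xs i) : X) : ℝ) +
          ‖(((Xs i).orthogonalProjectionOnto y : Xs i) : X)‖ ^ 2 := fun i =>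
        norm_sub_sq_real _ _
      rw [Finset.sum_congr rfl fun i _ => expand i]
      rw [Finset.sum_add_distrib, Finset.sum_sub_distrib, ← Finset.mul_sum,
        ← hc2, ← hcc]
      ring
    have hpos : 0 ≤ (∑ i, ‖f i‖ ^ 2) - c := by
      rw [key]
      positivity
    linarith
  -- conclude
  have hne : {r : ℝ | ∃ f : ι → X, (∀ i, f i ∈ Xs i) ∧ (∑ i, f i) = x ∧
      r = ∑ i, ‖f i‖ ^ 2}.Nonempty := ⟨c, hmem⟩
  have hbdd : BddBelow {r : ℝ | ∃ f : ι → X, (∀ i, f i ∈ Xs i) ∧ (∑ i, f i) = x ∧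
      r = ∑ i, ‖f i‖ ^ 2} := ⟨c, hlb⟩
  have : multiNormSq Xs x = c :=
    le_antisymm (csInf_le hbdd hmem) (le_csInf hne hlb)
  exact this.symm
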